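/- For every l ≥ 3 and n ≥ 3, any lT_2^2-saturated simple n-row 0-1 matrix has at least 2n + 1 columns; i.e., sat(n, lT_2^2) ≥ 2n + 1. -/

import Mathlib

/-- `F` is a submatrix of `M` (up to row/column permutations): there are injections
selecting rows and columns of `M` giving `F`. -/
def IsSubmatrix {α : Type*} {k c n m : ℕ} (F : Fin k → Fin c → α) (M : Fin n → Fin m → α) :
    Prop :=
  ∃ r : Fin k → Fin n, ∃ s : Fin c → Fin m,
    Function.Injective r ∧ Function.Injective s ∧ ∀ i j, M (r i) (s j) = F i j

/-- A matrix is simple if its columns are pairwise distinct. -/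
def Simple' {α : Type*} {n m : ℕ} (M : Fin n → Fin m → α) : Prop :=
  ∀ j₁ j₂ : Fin m, (∀ i, M i j₁ = M i j₂) → j₁ = j₂

/-- `C` occurs as a column of `M`. -/
def IsCol {α : Type*} {n m : ℕ} (M : Fin n → Fin m → α) (C : Fin n → α) : Prop :=
  ∃ j, ∀ i, M i j = C i

/-- The matrix `[M, C]` obtained by appending the column `C` to `M`. -/
def addCol {α : Type*} {n m : ℕ} (M : Fin n → Fin m → α) (C : Fin n → α) :
    Fin n → Fin (m + 1) → α :=
  fun i j => if h : (j : ℕ) < m then M i ⟨j, h⟩ else C i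

/-- `M` is `F`-saturated: simple, `F`-free, and adding any missing column creates `F`. -/
def Saturated {α : Type*} {k c n m : ℕ} (F : Fin k → Fin c → α) (M : Fin n → Fin m → α) :
    Prop :=
  Simple' M ∧ ¬ IsSubmatrix F M ∧
    ∀ C : Fin n → α, ¬ IsCol M C → IsSubmatrix F (addCol M C)

/-- The set of sizes (numbers of columns) of `F`-saturated `n`-row matrices. -/
def satSet {α : Type*} {k c : ℕ} (F : Fin k → Fin c → α) (n : ℕ) : Set ℕ :=
  {m | ∃ M : Fin n → Fin m → α, Saturated F M}

/-- The set of sizes of simple `F`-free `n`-row matrices. -/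
def forbSet {α : Type*} {k c : ℕ} (F : Fin k → Fin c → α) (n : ℕ) : Set ℕ :=
  {m | ∃ M : Fin n → Fin m → α, Simple' M ∧ ¬ IsSubmatrix F M}

/-- `K_k`: the `k × 2^k` 0-1 matrix of all distinct 0-1 columns of length `k`. -/
def Kfull (k : ℕ) : Fin k → Fin (2 ^ k) → Bool :=
  fun i j => Nat.testBit j.val i.val

open Finset

/-- weight of a 0-1 column -/
def wtB {n : ℕ} (C : Fin n → Bool) : ℕ := (univ.filter (fun i => C i = true)).card

/-- number of columns in the family covering both rows `i` and `j` -/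
def cov {n : ℕ} (𝒞 : Finset (Fin n → Bool)) (i j : Fin n) : ℕ :=
  (𝒞.filter (fun C => C i = true ∧ C j = true)).card

/-- indicator column of the pair `{i, j}` -/
def pInd {n : ℕ} (i j : Fin n) : Fin n → Bool := fun k => decide (k = i) || decide (k = j)

lemma pInd_eq_true {n : ℕ} {i j k : Fin n} : pInd i j k = true ↔ k = i ∨ k = j := by
  simp [pInd]

lemma pInd_filter {n : ℕ} (i j : Fin n) :
    (univ.filter (fun k => pInd i j k = true)) = {i, j} := by
  ext k; simp [pInd_eq_true]

lemma cov_symm {n : ℕ} (𝒞 : Finset (Fin n → Bool)) (i j : Fin n) :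
    cov 𝒞 i j = cov 𝒞 j i := by
  unfold cov; congr 1; apply Finset.filter_congr; intro C _; simp [and_comm]

lemma cov_le_diag {n : ℕ} (𝒞 : Finset (Fin n → Bool)) (i j : Fin n) :
    cov 𝒞 i j ≤ cov 𝒞 i i := by
  apply Finset.card_le_card
  intro C hC
  simp only [mem_filter] at *
  exact ⟨hC.1, hC.2.1, hC.2.1⟩

lemma two_le_wtB {n : ℕ} {C : Fin n → Bool} {i j : Fin n} (hij : i ≠ j)
    (hi : C i = true) (hj : C j = true) : 2 ≤ wtB C := by
  have hsub : ({i, j} : Finset (Fin n)) ⊆ univ.filter (fun k => C k = true) := by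
    intro k hk
    simp only [mem_insert, mem_singleton] at hk
    rcases hk with rfl | rfl <;> simp [hi, hj]
  calc 2 = ({i, j} : Finset (Fin n)).card := (Finset.card_pair hij).symm
    _ ≤ _ := Finset.card_le_card hsub

lemma caseA (l : ℕ) (hl : 3 ≤ l) {n : ℕ} (hn : 3 ≤ n) (𝒞 : Finset (Fin n → Bool))
    (hc2 : ∀ B : Fin n → Bool, 2 ≤ wtB B → B ∉ 𝒞 → ∃ i j : Fin n, i ≠ j ∧ B i = true ∧
      B j = true ∧ cov 𝒞 i j = l - 1)
    (i : Fin n) (hno : ∀ j : Fin n, j ≠ i → cov 𝒞 i j ≠ l - 1) :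
    n ≤ 𝒞.card := by
  have hpair : ∀ j : Fin n, j ≠ i → pInd i j ∈ 𝒞 := by
    intro j hj
    by_contra hB
    obtain ⟨a, b, hab, ha, hb, hcab⟩ := hc2 (pInd i j) (by
      have := two_le_wtB (Ne.symm hj) (show pInd i j i = true by simp [pInd_eq_true])
        (show pInd i j j = true by simp [pInd_eq_true])
      exact this) hB
    rw [pInd_eq_true] at ha hb
    rcases ha with rfl | rfl
    · rcases hb with rfl | rfl
      · exact hab rfl
      · exact hno b (by rintro rfl; exact hab rfl) hcab
    · rcases hb with rfl | rfl
      · exact hno a (by rintro rfl; exact hab rfl) (by rw [cov_symm]; exact hcab)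
      · exact hab rfl
  set P : Finset (Fin n → Bool) := (univ.erase i).image (fun j => pInd i j) with hP
  have hPsub : P ⊆ 𝒞 := by
    intro C hC
    rw [hP, mem_image] at hC
    obtain ⟨j, hj, rfl⟩ := hC
    exact hpair j (Finset.ne_of_mem_erase hj)
  have hPcard : P.card = n - 1 := by
    rw [hP, Finset.card_image_of_injOn, Finset.card_erase_of_mem (mem_univ i), card_univ,
      Fintype.card_fin]
    intro a ha b hb hab
    have : pInd i a a = true := by simp [pInd_eq_true]
    simp only at hab
    rw [hab, pInd_eq_true] at this
    rcases this with h | h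
    · exact absurd h (Finset.ne_of_mem_erase ha)
    · exact h
  have h2 : 1 < (univ.erase i).card := by
    rw [Finset.card_erase_of_mem (mem_univ i), card_univ, Fintype.card_fin]; omega
  obtain ⟨j, hjmem, k, hkmem, hjk⟩ := Finset.one_lt_card.mp h2
  have hji : j ≠ i := Finset.ne_of_mem_erase hjmem
  have hki : k ≠ i := Finset.ne_of_mem_erase hkmem
  set T : Fin n → Bool := fun t => pInd i j t || decide (t = k) with hT
  have hTi : T i = true := by simp [hT, pInd_eq_true]
  have hTj : T j = true := by simp [hT, pInd_eq_true]
  have hTk : T k = true := by simp [hT]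
  have hTtrue : ∀ t : Fin n, T t = true ↔ t = i ∨ t = j ∨ t = k := by
    intro t; simp [hT, pInd_eq_true, or_assoc]
  have hTnotP : T ∉ P := by
    intro hmem
    rw [hP, mem_image] at hmem
    obtain ⟨j', hj', hTeq⟩ := hmem
    have h1 : T j = true := hTj
    have h2' : T k = true := hTk
    rw [← hTeq, pInd_eq_true] at h1 h2'
    rcases h1 with h1 | h1
    · exact hji h1
    · rcases h2' with h2' | h2'
      · exact hki h2'
      · exact hjk (h1.trans h2'.symm)
  by_cases hmem : T ∈ 𝒞
  · have hsub : insert T P ⊆ 𝒞 := by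
      intro C hC
      rcases Finset.mem_insert.mp hC with rfl | hC
      · exact hmem
      · exact hPsub hC
    have := Finset.card_le_card hsub
    rw [Finset.card_insert_of_notMem hTnotP, hPcard] at this
    clear * - this hn
    omega
  · obtain ⟨a, b, hab, ha, hb, hcab⟩ := hc2 T (two_le_wtB (Ne.symm hji) hTi hTj) hmem
    rw [hTtrue] at ha hb
    have hcjk : cov 𝒞 j k = l - 1 := by
      rcases ha with rfl | rfl | rfl
      · exact absurd hcab (by
          rcases hb with rfl | rfl | rfl
          · exact absurd rfl hab
          · exact hno b hji
          · exact hno b hki)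
      · rcases hb with rfl | rfl | rfl
        · exact absurd ((cov_symm 𝒞 a b).symm.trans hcab) (hno a hji)
        · exact absurd rfl hab
        · exact hcab
      · rcases hb with rfl | rfl | rfl
        · exact absurd ((cov_symm 𝒞 a b).symm.trans hcab) (hno a hki)
        · exact (cov_symm 𝒞 a b).symm.trans hcab
        · exact absurd rfl hab
    have hQcard : 1 < (𝒞.filter (fun C => C j = true ∧ C k = true)).card := by
      rw [show (𝒞.filter (fun C => C j = true ∧ C k = true)).card = cov 𝒞 j k from rfl, hcjk]
      clear * - hl
      omega
    obtain ⟨C₁, hC₁, C₂, hC₂, hC₁₂⟩ := Finset.one_lt_card.mp hQcard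
    simp only [mem_filter] at hC₁ hC₂
    have hnotP : ∀ C : Fin n → Bool, C j = true → C k = true → C ∉ P := by
      intro C hCj hCk hmemP
      rw [hP, mem_image] at hmemP
      obtain ⟨j', hj', rfl⟩ := hmemP
      rw [pInd_eq_true] at hCj hCk
      rcases hCj with h | h
      · exact hji h
      · rcases hCk with h' | h'
        · exact hki h'
        · exact hjk (h.trans h'.symm)
    have hsub : insert C₁ (insert C₂ P) ⊆ 𝒞 := by
      intro C hC
      rcases Finset.mem_insert.mp hC with rfl | hC
      · exact hC₁.1
      · rcases Finset.mem_insert.mp hC with rfl | hC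
        · exact hC₂.1
        · exact hPsub hC
    have hC2not : C₂ ∉ P := hnotP C₂ hC₂.2.1 hC₂.2.2
    have hC1not : C₁ ∉ insert C₂ P := by
      intro h
      rcases Finset.mem_insert.mp h with h | h
      · exact hC₁₂ h
      · exact hnotP C₁ hC₁.2.1 hC₁.2.2 h
    have hcard : (insert C₁ (insert C₂ P)).card = n + 1 := by
      rw [Finset.card_insert_of_notMem hC1not, Finset.card_insert_of_notMem hC2not, hPcard]
      clear * - hn
      omega
    have h9 := Finset.card_le_card hsub
    rw [hcard] at h9
    exact le_trans (Nat.le_succ n) h9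

lemma caseB_ker (l : ℕ) (hl : 3 ≤ l) {n : ℕ} (𝒞 : Finset (Fin n → Bool))
    (hc1 : ∀ i j : Fin n, i ≠ j → cov 𝒞 i j ≤ l - 1)
    (hpairmem : ∀ i j : Fin n, i ≠ j → cov 𝒞 i j ≠ l - 1 → pInd i j ∈ 𝒞)
    (hgood : ∀ i : Fin n, ∃ j, j ≠ i ∧ cov 𝒞 i j = l - 1)
    (x : Fin n → ℝ)
    (hx : ∀ C ∈ 𝒞, ∑ i ∈ univ.filter (fun i => C i = true), x i = 0) :
    x = 0 := by
  by_contra hxne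
  have hex : ∃ i₀ : Fin n, x i₀ ≠ 0 := by
    by_contra hc
    push_neg at hc
    exact hxne (funext fun i => hc i)
  obtain ⟨i₀, hi₀⟩ := hex
  set L : ℝ := ((l - 1 : ℕ) : ℝ) with hL
  have hanti : ∀ i j : Fin n, i ≠ j → cov 𝒞 i j ≠ l - 1 → x j = - x i := by
    intro i j hij hng
    have h0 := hx (pInd i j) (hpairmem i j hij hng)
    rw [pInd_filter i j, Finset.sum_pair hij] at h0
    linarith
  have hdiag : ∀ i : Fin n, l - 1 ≤ cov 𝒞 i i := by
    intro i
    obtain ⟨j, hj, hcov⟩ := hgood i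
    calc l - 1 = cov 𝒞 i j := hcov.symm
      _ ≤ cov 𝒞 i i := cov_le_diag 𝒞 i j
  set f : Fin n × Fin n → ℝ :=
    fun p => (L - (cov 𝒞 p.1 p.2 : ℝ)) * (x p.1 * x p.2) with hf
  have hsq : ∑ C ∈ 𝒞, (∑ i ∈ univ.filter (fun i => C i = true), x i) ^ 2 = 0 := by
    apply Finset.sum_eq_zero
    intro C hC
    rw [hx C hC]
    ring
  have hcovsum : ∑ p : Fin n × Fin n, ((cov 𝒞 p.1 p.2 : ℝ)) * (x p.1 * x p.2)
      = ∑ C ∈ 𝒞, (∑ i ∈ univ.filter (fun i => C i = true), x i) ^ 2 := by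
    rw [Fintype.sum_prod_type]
    have covcast : ∀ i j : Fin n, ((cov 𝒞 i j : ℝ))
        = ∑ C ∈ 𝒞, (if C i = true ∧ C j = true then (1 : ℝ) else 0) := by
      intro i j
      rw [cov, Finset.natCast_card_filter]
    calc ∑ i, ∑ j, ((cov 𝒞 i j : ℝ)) * (x i * x j)
        = ∑ i, ∑ j, ∑ C ∈ 𝒞, (if C i = true ∧ C j = true then (1:ℝ) else 0) * (x i * x j) := by
          apply Finset.sum_congr rfl; intro i _
          apply Finset.sum_congr rfl; intro j _
          rw [covcast i j, Finset.sum_mul]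
      _ = ∑ i, ∑ C ∈ 𝒞, ∑ j, (if C i = true ∧ C j = true then (1:ℝ) else 0) * (x i * x j) := by
          apply Finset.sum_congr rfl; intro i _
          rw [Finset.sum_comm]
      _ = ∑ C ∈ 𝒞, ∑ i, ∑ j, (if C i = true ∧ C j = true then (1:ℝ) else 0) * (x i * x j) := by
          rw [Finset.sum_comm]
      _ = ∑ C ∈ 𝒞, (∑ i ∈ univ.filter (fun i => C i = true), x i) ^ 2 := by
          apply Finset.sum_congr rfl; intro C _
          have hsplit : ∀ i j : Fin n,
              (if C i = true ∧ C j = true then (1:ℝ) else 0) * (x i * x j)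
              = (if C i = true then x i else 0) * (if C j = true then x j else 0) := by
            intro i j
            by_cases h1 : C i = true <;> by_cases h2 : C j = true <;> simp [h1, h2]
          simp_rw [hsplit]
          rw [← Finset.sum_mul_sum]
          rw [sq, Finset.sum_filter]
  have hconstsum : ∑ p : Fin n × Fin n, L * (x p.1 * x p.2) = L * (∑ i, x i) ^ 2 := by
    rw [← Finset.mul_sum, Fintype.sum_prod_type, ← Fintype.sum_mul_sum, sq]
  have htotal : ∑ p : Fin n × Fin n, f p = L * (∑ i, x i) ^ 2 := by
    have hfp : ∀ p : Fin n × Fin n, f p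
        = L * (x p.1 * x p.2) - ((cov 𝒞 p.1 p.2 : ℝ)) * (x p.1 * x p.2) := by
      intro p; rw [hf]; ring
    simp_rw [hfp]
    rw [Finset.sum_sub_distrib, hcovsum, hsq, hconstsum]
    ring
  have hLnonneg : 0 ≤ L := by rw [hL]; positivity
  have htotalnonneg : 0 ≤ ∑ p : Fin n × Fin n, f p := by
    rw [htotal]; positivity
  have hterm : ∀ p ∈ (univ : Finset (Fin n × Fin n)), f p ≤ 0 := by
    rintro ⟨i, j⟩ -
    by_cases hij : i = j
    · subst hij
      have h1 : L - (cov 𝒞 i i : ℝ) ≤ 0 := by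
        have h2 := hdiag i
        have h3 : ((l - 1 : ℕ) : ℝ) ≤ ((cov 𝒞 i i : ℕ) : ℝ) := Nat.cast_le.mpr h2
        rw [hL]; linarith
      have h2 : 0 ≤ x i * x i := mul_self_nonneg _
      rw [hf]
      simp only
      nlinarith
    · by_cases hg : cov 𝒞 i j = l - 1
      · rw [hf]; simp only [hg, hL]; ring_nf; simp
      · have hxj : x j = - x i := hanti i j hij hg
        have hcle : cov 𝒞 i j ≤ l - 1 := hc1 i j hij
        have h1 : 0 ≤ L - (cov 𝒞 i j : ℝ) := by
          have h3 : ((cov 𝒞 i j : ℕ) : ℝ) ≤ ((l - 1 : ℕ) : ℝ) := Nat.cast_le.mpr hcle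
          rw [hL]; linarith
        rw [hf]
        simp only [hxj]
        nlinarith [mul_self_nonneg (x i)]
  have hzero : ∀ p ∈ (univ : Finset (Fin n × Fin n)), f p = 0 := by
    have hle : ∑ p : Fin n × Fin n, f p ≤ 0 := Finset.sum_nonpos hterm
    have heq : ∑ p : Fin n × Fin n, f p = 0 := le_antisymm hle htotalnonneg
    exact (Finset.sum_eq_zero_iff_of_nonpos hterm).mp heq
  have hdiag0 : cov 𝒞 i₀ i₀ = l - 1 := by
    have h0 := hzero (i₀, i₀) (mem_univ _)
    rw [hf] at h0
    simp only at h0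
    have hxx : x i₀ * x i₀ ≠ 0 := mul_ne_zero hi₀ hi₀
    have h4 : L - (cov 𝒞 i₀ i₀ : ℝ) = 0 := by
      rcases mul_eq_zero.mp h0 with h | h
      · exact h
      · exact absurd h hxx
    have h5 : ((l - 1 : ℕ) : ℝ) = ((cov 𝒞 i₀ i₀ : ℕ) : ℝ) := by rw [hL] at h4; linarith
    exact (Nat.cast_inj.mp h5).symm
  have hallgood : ∀ j : Fin n, j ≠ i₀ → cov 𝒞 i₀ j = l - 1 := by
    intro j hj
    by_contra hng
    have hxj : x j = - x i₀ := hanti i₀ j (Ne.symm hj) hng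
    have h0 := hzero (i₀, j) (mem_univ _)
    rw [hf] at h0
    simp only at h0
    have hcle : cov 𝒞 i₀ j ≤ l - 1 := hc1 i₀ j (Ne.symm hj)
    have hclt : cov 𝒞 i₀ j < l - 1 := lt_of_le_of_ne hcle hng
    have h1 : L - (cov 𝒞 i₀ j : ℝ) ≠ 0 := by
      have h3 : ((cov 𝒞 i₀ j : ℕ) : ℝ) < ((l - 1 : ℕ) : ℝ) := Nat.cast_lt.mpr hclt
      rw [hL]; intro h; linarith
    have hxjne : x j ≠ 0 := by rw [hxj]; exact neg_ne_zero.mpr hi₀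
    exact (mul_ne_zero h1 (mul_ne_zero hi₀ hxjne)) h0
  have himp : ∀ j : Fin n, ∀ C ∈ 𝒞, C i₀ = true → C j = true := by
    intro j C hC hCi
    by_cases hj : j = i₀
    · rw [hj]; exact hCi
    · have hsub : 𝒞.filter (fun C => C i₀ = true ∧ C j = true)
          ⊆ 𝒞.filter (fun C => C i₀ = true ∧ C i₀ = true) := by
        intro D hD
        simp only [mem_filter] at *
        exact ⟨hD.1, hD.2.1, hD.2.1⟩
      have hcards : (𝒞.filter (fun C => C i₀ = true ∧ C i₀ = true)).card
          ≤ (𝒞.filter (fun C => C i₀ = true ∧ C j = true)).card := by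
        have e1 : (𝒞.filter (fun C => C i₀ = true ∧ C j = true)).card = l - 1 :=
          hallgood j hj
        have e2 : (𝒞.filter (fun C => C i₀ = true ∧ C i₀ = true)).card = l - 1 := hdiag0
        rw [e1, e2]
      have heq := Finset.eq_of_subset_of_card_le hsub hcards
      have hCmem : C ∈ 𝒞.filter (fun C => C i₀ = true ∧ C i₀ = true) := by
        simp only [mem_filter]; exact ⟨hC, hCi, hCi⟩
      rw [← heq] at hCmem
      simp only [mem_filter] at hCmem
      exact hCmem.2.2
  have hsubsingle : 𝒞.filter (fun C => C i₀ = true ∧ C i₀ = true)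
      ⊆ {fun _ => true} := by
    intro C hC
    simp only [mem_filter] at hC
    have hCall : C = fun _ => true := funext fun j => himp j C hC.1 hC.2.1
    simp [hCall]
  have hle1 := Finset.card_le_card hsubsingle
  rw [Finset.card_singleton] at hle1
  have hl1 : (𝒞.filter (fun C => C i₀ = true ∧ C i₀ = true)).card = l - 1 := hdiag0
  rw [hl1] at hle1
  clear * - hle1 hl
  omega

lemma caseB_card {n : ℕ} (𝒞 : Finset (Fin n → Bool))
    (hker : ∀ x : Fin n → ℝ,
      (∀ C ∈ 𝒞, ∑ i ∈ univ.filter (fun i => C i = true), x i = 0) → x = 0) :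
    n ≤ 𝒞.card := by
  let φ : (Fin n → ℝ) →ₗ[ℝ] (↥𝒞 → ℝ) :=
    { toFun := fun x C => ∑ i ∈ univ.filter (fun i => (C : Fin n → Bool) i = true), x i
      map_add' := by
        intro x y
        funext C
        simp [Finset.sum_add_distrib]
      map_smul' := by
        intro c x
        funext C
        simp [Finset.mul_sum] }
  have hinj : Function.Injective φ := by
    rw [← LinearMap.ker_eq_bot, LinearMap.ker_eq_bot']
    intro x hx0
    apply hker x
    intro C hC
    have := congrFun hx0 ⟨C, hC⟩
    simpa [φ] using this
  have hrank := LinearMap.finrank_le_finrank_of_injective hinj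
  rw [Module.finrank_fintype_fun_eq_card, Module.finrank_fintype_fun_eq_card,
    Fintype.card_fin, Fintype.card_coe] at hrank
  exact hrank

theorem key_card (l : ℕ) (hl : 3 ≤ l) {n : ℕ} (hn : 3 ≤ n) (𝒞 : Finset (Fin n → Bool))
    (hc1 : ∀ i j : Fin n, i ≠ j → cov 𝒞 i j ≤ l - 1)
    (hc2 : ∀ B : Fin n → Bool, 2 ≤ wtB B → B ∉ 𝒞 → ∃ i j : Fin n, i ≠ j ∧ B i = true ∧
      B j = true ∧ cov 𝒞 i j = l - 1) :
    n ≤ 𝒞.card := by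
  by_cases hA : ∃ i : Fin n, ∀ j : Fin n, j ≠ i → cov 𝒞 i j ≠ l - 1
  · obtain ⟨i, hno⟩ := hA
    exact caseA l hl hn 𝒞 hc2 i hno
  · push_neg at hA
    have hpairmem : ∀ i j : Fin n, i ≠ j → cov 𝒞 i j ≠ l - 1 → pInd i j ∈ 𝒞 := by
      intro i j hij hng
      by_contra hB
      obtain ⟨a, b, hab, ha, hb, hcab⟩ := hc2 (pInd i j) (two_le_wtB hij
        (show pInd i j i = true by simp [pInd_eq_true])
        (show pInd i j j = true by simp [pInd_eq_true])) hB
      rw [pInd_eq_true] at ha hb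
      rcases ha with rfl | rfl
      · rcases hb with rfl | rfl
        · exact hab rfl
        · exact hng hcab
      · rcases hb with rfl | rfl
        · exact hng ((cov_symm 𝒞 a b).symm.trans hcab)
        · exact hab rfl
    have hgood : ∀ i : Fin n, ∃ j, j ≠ i ∧ cov 𝒞 i j = l - 1 := by
      intro i
      obtain ⟨j, hj, hcov⟩ := hA i
      exact ⟨j, hj, hcov⟩
    exact caseB_card 𝒞 (caseB_ker l hl 𝒞 hc1 hpairmem hgood)


theorem stmt_10 (l n : ℕ) (hl : 3 ≤ l) (hn : 3 ≤ n) (m : ℕ) (M : Fin n → Fin m → Bool)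
    (hM : Saturated (fun (_ : Fin 2) (_ : Fin l) => true) M) :
    2 * n + 1 ≤ m := by
  obtain ⟨hsimple, hfree, hsat⟩ := hM
  set col : Fin m → (Fin n → Bool) := fun j i => M i j with hcol
  have colinj : Function.Injective col := by
    intro a b hab
    exact hsimple a b (fun i => congrFun hab i)
  -- building a forbidden submatrix from many columns on a pair of rows
  have buildsub : ∀ (i j : Fin n), i ≠ j →
      l ≤ (univ.filter (fun t => M i t = true ∧ M j t = true)).card → False := by
    intro i j hij hcard
    apply hfree
    obtain ⟨T', hT'sub, hT'card⟩ :=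
      Finset.exists_subset_card_eq (s := univ.filter (fun t => M i t = true ∧ M j t = true)) (n := l) hcard
    have e := T'.orderIsoOfFin hT'card
    refine ⟨![i, j], fun b => (e b : Fin m), ?_, ?_, ?_⟩
    · intro a b hab
      fin_cases a <;> fin_cases b <;> simp_all
    · intro a b hab
      have : e a = e b := Subtype.ext hab
      exact e.injective this
    · intro a b
      have hmem := hT'sub (e b).2
      simp only [mem_filter] at hmem
      fin_cases a <;> simp [hmem.2.1, hmem.2.2]
  -- extraction from saturation
  have extract : ∀ B : Fin n → Bool, ¬ IsCol M B → ∃ i j : Fin n, i ≠ j ∧ B i = true ∧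
      B j = true ∧ l - 1 ≤ (univ.filter (fun t => M i t = true ∧ M j t = true)).card := by
    intro B hB
    obtain ⟨r, s, hr, hs, hval⟩ := hsat B hB
    have hij : r 0 ≠ r 1 := by
      intro h
      have := hr h
      exact absurd this (by decide)
    by_cases hall : ∀ b : Fin l, (s b : ℕ) < m
    · exfalso
      apply hfree
      refine ⟨r, fun b => ⟨(s b : ℕ), hall b⟩, hr, ?_, ?_⟩
      · intro a b hab
        have h' := congrArg Fin.val hab
        exact hs (Fin.ext h')
      · intro a b
        have h := hval a b
        rw [addCol] at h
        simp only at h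
        rw [dif_pos (hall b)] at h
        exact h
    · push_neg at hall
      obtain ⟨b₀, hb₀⟩ := hall
      have hb₀m : (s b₀ : ℕ) = m := le_antisymm (Nat.lt_succ_iff.mp (s b₀).isLt) hb₀
      have hBr : ∀ a : Fin 2, B (r a) = true := by
        intro a
        have h := hval a b₀
        rw [addCol] at h
        simp only at h
        rw [dif_neg (by omega)] at h
        exact h
      have hm0 : 0 < m := by
        by_contra h0
        push_neg at h0
        have hm' : m = 0 := by omega
        have h01 : (⟨0, by omega⟩ : Fin l) ≠ ⟨1, by omega⟩ := by
          intro h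
          exact absurd (congrArg Fin.val h) (by simp)
        apply h01
        apply hs
        apply Fin.ext
        have v1 : (s ⟨0, by omega⟩ : ℕ) < m + 1 := (s _).isLt
        have v2 : (s ⟨1, by omega⟩ : ℕ) < m + 1 := (s _).isLt
        omega
      refine ⟨r 0, r 1, hij, hBr 0, hBr 1, ?_⟩
      have hcount := Finset.card_le_card_of_injOn
        (f := fun b : Fin l => (⟨(s b : ℕ) % m, Nat.mod_lt _ hm0⟩ : Fin m))
        (s := univ.erase b₀)
        (t := univ.filter (fun t => M (r 0) t = true ∧ M (r 1) t = true))
        (by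
          intro b hb
          have hbne : b ≠ b₀ := Finset.ne_of_mem_erase hb
          have hsne : s b ≠ s b₀ := fun h => hbne (hs h)
          have hvne : (s b : ℕ) ≠ m := by
            intro h
            exact hsne (Fin.ext (h.trans hb₀m.symm))
          have hlt : (s b : ℕ) < m := by
            have := (s b).isLt
            omega
          have hmod : (s b : ℕ) % m = (s b : ℕ) := Nat.mod_eq_of_lt hlt
          simp only [mem_coe, mem_filter, mem_univ, true_and]
          constructor
          · have h := hval 0 b
            rw [addCol] at h
            simp only at h
            rw [dif_pos hlt] at h
            convert h using 2
            exact Fin.ext hmod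
          · have h := hval 1 b
            rw [addCol] at h
            simp only at h
            rw [dif_pos hlt] at h
            convert h using 2
            exact Fin.ext hmod)
        (by
          intro a ha b hb hab
          have hane : a ≠ b₀ := Finset.ne_of_mem_erase ha
          have hbne : b ≠ b₀ := Finset.ne_of_mem_erase hb
          have hva : (s a : ℕ) < m := by
            have h1 : (s a : ℕ) ≠ m := fun h => hane (hs (Fin.ext (h.trans hb₀m.symm)))
            have := (s a).isLt; omega
          have hvb : (s b : ℕ) < m := by
            have h1 : (s b : ℕ) ≠ m := fun h => hbne (hs (Fin.ext (h.trans hb₀m.symm)))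
            have := (s b).isLt; omega
          have := congrArg Fin.val hab
          simp only at this
          rw [Nat.mod_eq_of_lt hva, Nat.mod_eq_of_lt hvb] at this
          exact hs (Fin.ext this))
      rw [Finset.card_erase_of_mem (mem_univ b₀), card_univ, Fintype.card_fin] at hcount
      exact hcount
  -- the family of heavy columns
  set 𝒞 : Finset (Fin n → Bool) := (univ.image col).filter (fun C => 2 ≤ wtB C) with h𝒞
  -- translation between cov and column counts
  have covT : ∀ i j : Fin n, i ≠ j →
      cov 𝒞 i j = (univ.filter (fun t => M i t = true ∧ M j t = true)).card := by
    intro i j hij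
    rw [cov]
    have himg : 𝒞.filter (fun C => C i = true ∧ C j = true)
        = (univ.filter (fun t => M i t = true ∧ M j t = true)).image col := by
      ext C
      simp only [h𝒞, mem_filter, mem_image, mem_univ, true_and]
      constructor
      · rintro ⟨⟨⟨t, rfl⟩, hw⟩, hi, hj⟩
        exact ⟨t, ⟨hi, hj⟩, rfl⟩
      · rintro ⟨t, ⟨hi, hj⟩, rfl⟩
        exact ⟨⟨⟨t, rfl⟩, two_le_wtB hij hi hj⟩, hi, hj⟩
    rw [himg, Finset.card_image_of_injective _ colinj]
  have hc1 : ∀ i j : Fin n, i ≠ j → cov 𝒞 i j ≤ l - 1 := by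
    intro i j hij
    by_contra hgt
    push_neg at hgt
    apply buildsub i j hij
    rw [← covT i j hij]
    omega
  have hc2 : ∀ B : Fin n → Bool, 2 ≤ wtB B → B ∉ 𝒞 → ∃ i j : Fin n, i ≠ j ∧ B i = true ∧
      B j = true ∧ cov 𝒞 i j = l - 1 := by
    intro B hw hBnot
    have hnc : ¬ IsCol M B := by
      rintro ⟨t, ht⟩
      apply hBnot
      have hBt : B = col t := funext fun i => (ht i).symm
      rw [h𝒞, mem_filter]
      exact ⟨mem_image.mpr ⟨t, mem_univ t, hBt.symm⟩, hw⟩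
    obtain ⟨i, j, hij, hBi, hBj, hle⟩ := extract B hnc
    refine ⟨i, j, hij, hBi, hBj, ?_⟩
    have h1 : cov 𝒞 i j ≤ l - 1 := hc1 i j hij
    have h2 := covT i j hij
    omega
  -- low-weight columns occur
  have lowcol : ∀ B : Fin n → Bool, wtB B ≤ 1 → IsCol M B := by
    intro B hw
    by_contra hnc
    obtain ⟨i, j, hij, hBi, hBj, -⟩ := extract B hnc
    have := two_le_wtB hij hBi hBj
    omega
  -- counting
  have hCols : (univ.image col).card = m := by
    rw [Finset.card_image_of_injective _ colinj, card_univ, Fintype.card_fin]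
  have hsplit := Finset.card_filter_add_card_filter_not
    (s := univ.image col) (p := fun C => 2 ≤ wtB C)
  have hkey : n ≤ 𝒞.card := key_card l hl hn 𝒞 hc1 hc2
  -- low-weight part
  have he0 : (fun _ => false : Fin n → Bool) ∈ univ.image col := by
    obtain ⟨t, ht⟩ := lowcol (fun _ => false) (by simp [wtB])
    exact mem_image.mpr ⟨t, mem_univ t, funext fun i => ht i⟩
  have hwt1 : ∀ i : Fin n, wtB (fun k => decide (k = i)) = 1 := by
    intro i
    rw [wtB, show (univ.filter (fun k => decide (k = i) = true)) = {i} from by ext k; simp]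
    exact Finset.card_singleton i
  have heU : ∀ i : Fin n, (fun k => decide (k = i) : Fin n → Bool) ∈ univ.image col := by
    intro i
    obtain ⟨t, ht⟩ := lowcol (fun k => decide (k = i)) (by rw [hwt1 i])
    exact mem_image.mpr ⟨t, mem_univ t, funext fun k => ht k⟩
  have hLsub : insert (fun _ => false : Fin n → Bool)
      (univ.image (fun i : Fin n => (fun k => decide (k = i) : Fin n → Bool)))
      ⊆ (univ.image col).filter (fun C => ¬ 2 ≤ wtB C) := by
    intro C hC
    rcases Finset.mem_insert.mp hC with rfl | hC
    · rw [mem_filter]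
      refine ⟨he0, ?_⟩
      simp [wtB]
    · rw [mem_image] at hC
      obtain ⟨i, _, rfl⟩ := hC
      rw [mem_filter]
      refine ⟨heU i, ?_⟩
      rw [hwt1 i]
      omega
  have hLcard : (insert (fun _ => false : Fin n → Bool)
      (univ.image (fun i : Fin n => (fun k => decide (k = i) : Fin n → Bool)))).card
      = n + 1 := by
    rw [Finset.card_insert_of_notMem, Finset.card_image_of_injective, card_univ,
      Fintype.card_fin]
    · intro a b hab
      have := congrFun hab a
      simp at this
      exact this
    · intro hmem
      rw [mem_image] at hmem
      obtain ⟨i, _, hi⟩ := hmem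
      have := congrFun hi i
      simp at this
  have hlow : n + 1 ≤ ((univ.image col).filter (fun C => ¬ 2 ≤ wtB C)).card := by
    rw [← hLcard]
    exact Finset.card_le_card hLsub
  rw [hCols] at hsplit
  have h𝒞card : 𝒞.card = ((univ.image col).filter (fun C => 2 ≤ wtB C)).card := by rw [h𝒞]
  rw [h𝒞card] at hkey
  clear * - hsplit hkey hlow
  omega
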